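/- The Gács–Körner-based shared information SI_∧(S;Y,Z) := max{I(Q;S) : Q = f(Y) = f'(Z) almost surely, for deterministic functions f, f'} is additive: if (S1,Y1,Z1) is independent of (S2,Y2,Z2), then SI_∧(S1S2; Y1Y2, Z1Z2) = SI_∧(S1;Y1,Z1) + SI_∧(S2;Y2,Z2). -/

import Mathlib

open scoped BigOperators

/-- A probability distribution on a finite type. -/
def IsProbDist {A : Type} [Fintype A] (p : A → ℝ) : Prop :=
  (∀ x, 0 ≤ p x) ∧ ∑ x, p x = 1

/-- Shannon mutual information `I(A;B)` of a joint distribution on `A × B`. -/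
noncomputable def mi2 {A B : Type} [Fintype A] [Fintype B] (p : A × B → ℝ) : ℝ :=
  ∑ a, ∑ b, p (a, b) * Real.log (p (a, b) / ((∑ b', p (a, b')) * (∑ a', p (a', b))))

/-- Conditional mutual information `I(A;B|C)` of a joint distribution on `A × B × C`. -/
noncomputable def cmi3 {A B C : Type} [Fintype A] [Fintype B] [Fintype C]
    (p : A × B × C → ℝ) : ℝ :=
  ∑ a, ∑ b, ∑ c, p (a, b, c) *
    Real.log ((p (a, b, c) * (∑ a', ∑ b', p (a', b', c))) /
      ((∑ b', p (a, b', c)) * (∑ a', p (a', b, c))))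

/-- Marginal distribution of `(S,Y)`. -/
noncomputable def margSY {S Y Z : Type} [Fintype S] [Fintype Y] [Fintype Z]
    (p : S × Y × Z → ℝ) : S × Y → ℝ := fun x => ∑ z, p (x.1, x.2, z)

/-- Marginal distribution of `(S,Z)`. -/
noncomputable def margSZ {S Y Z : Type} [Fintype S] [Fintype Y] [Fintype Z]
    (p : S × Y × Z → ℝ) : S × Z → ℝ := fun x => ∑ y, p (x.1, y, x.2)

/-- `I(S;Y)`. -/
noncomputable def ISY {S Y Z : Type} [Fintype S] [Fintype Y] [Fintype Z]
    (p : S × Y × Z → ℝ) : ℝ := mi2 (margSY p)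

/-- `I(S;Z)`. -/
noncomputable def ISZ {S Y Z : Type} [Fintype S] [Fintype Y] [Fintype Z]
    (p : S × Y × Z → ℝ) : ℝ := mi2 (margSZ p)

/-- `I(S;YZ)`, the mutual information of `S` with the pair `(Y,Z)`. -/
noncomputable def ISYZ {S Y Z : Type} [Fintype S] [Fintype Y] [Fintype Z]
    (p : S × Y × Z → ℝ) : ℝ := mi2 p

/-- `I(S;Y|Z)`. -/
noncomputable def ISYgZ {S Y Z : Type} [Fintype S] [Fintype Y] [Fintype Z]
    (p : S × Y × Z → ℝ) : ℝ := cmi3 p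

/-- The same joint distribution, with the roles of `Y` and `Z` exchanged. -/
def swapYZ {S Y Z : Type} (p : S × Y × Z → ℝ) : S × Z × Y → ℝ :=
  fun x => p (x.1, x.2.2, x.2.1)

/-- `I(S;Z|Y)`. -/
noncomputable def ISZgY {S Y Z : Type} [Fintype S] [Fintype Y] [Fintype Z]
    (p : S × Y × Z → ℝ) : ℝ := ISYgZ (swapYZ p)

/-- The joint distribution of two independent triples, grouped componentwise. -/
def prodDist {S1 Y1 Z1 S2 Y2 Z2 : Type}
    (p1 : S1 × Y1 × Z1 → ℝ) (p2 : S2 × Y2 × Z2 → ℝ) :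
    (S1 × S2) × (Y1 × Y2) × (Z1 × Z2) → ℝ :=
  fun x => p1 (x.1.1, x.2.1.1, x.2.2.1) * p2 (x.1.2, x.2.1.2, x.2.2.2)

/-- The Gács–Körner-based shared information
`SI_∧(S;Y,Z) = max { I(Q;S) : Q = f(Y) = f'(Z) a.s. }`, where the optimization
runs over all finite random variables `Q` that are almost surely a deterministic
function both of `Y` and of `Z`. -/
noncomputable def SIwedge {S Y Z : Type} [Fintype S] [Fintype Y] [Fintype Z]
    (p : S × Y × Z → ℝ) : ℝ :=
  sSup { r : ℝ | ∃ (Q : Type) (instQ : Fintype Q) (_ : DecidableEq Q)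
      (f : Y → Q) (f' : Z → Q),
      (∀ s y z, p (s, y, z) ≠ 0 → f y = f' z) ∧
      r = @mi2 Q S instQ _ (fun x => ∑ y, ∑ z, if f y = x.1 then p (x.2, y, z) else 0) }


open scoped BigOperators

section AuxDefs

/-- The log-sum inequality. -/
lemma logSum {ι : Type*} (s : Finset ι) (u v : ι → ℝ)
    (hu : ∀ i ∈ s, 0 ≤ u i) (hv : ∀ i ∈ s, 0 ≤ v i)
    (huv : ∀ i ∈ s, v i = 0 → u i = 0) :
    (∑ i ∈ s, u i) * Real.log ((∑ i ∈ s, u i) / (∑ i ∈ s, v i)) ≤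
      ∑ i ∈ s, u i * Real.log (u i / v i) := by
  rcases eq_or_lt_of_le (Finset.sum_nonneg hv) with hV0 | hVpos
  · have hv0 : ∀ i ∈ s, v i = 0 := by
      intro i hi
      exact (Finset.sum_eq_zero_iff_of_nonneg hv).mp hV0.symm i hi
    have hu0 : ∀ i ∈ s, u i = 0 := fun i hi => huv i hi (hv0 i hi)
    rw [Finset.sum_eq_zero hu0, zero_mul]
    apply le_of_eq
    symm
    apply Finset.sum_eq_zero
    intro i hi; rw [hu0 i hi, zero_mul]
  · set V := ∑ i ∈ s, v i with hV
    set U := ∑ i ∈ s, u i with hU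
    have hVne : V ≠ 0 := ne_of_gt hVpos
    have key := Real.convexOn_mul_log.map_sum_le (t := s)
      (w := fun i => v i / V) (p := fun i => u i / v i)
      (fun i hi => div_nonneg (hv i hi) hVpos.le)
      (by rw [← Finset.sum_div, ← hV, div_self hVne])
      (fun i hi => Set.mem_Ici.mpr (div_nonneg (hu i hi) (hv i hi)))
    have hsum : ∑ i ∈ s, (v i / V) • (u i / v i) = U / V := by
      rw [hU, Finset.sum_div]
      apply Finset.sum_congr rfl
      intro i hi
      rcases eq_or_ne (v i) 0 with h0 | h0
      · rw [huv i hi h0, h0]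
        simp only [zero_div, zero_smul]
      · rw [smul_eq_mul]; field_simp
    rw [hsum] at key
    have key2 := mul_le_mul_of_nonneg_left key hVpos.le
    have e1 : V * (U / V * Real.log (U / V)) = U * Real.log (U / V) := by
      field_simp
    rw [e1] at key2
    refine key2.trans (le_of_eq ?_)
    rw [Finset.mul_sum]
    apply Finset.sum_congr rfl
    intro i hi
    simp only [smul_eq_mul]
    rcases eq_or_ne (v i) 0 with h0 | h0
    · rw [huv i hi h0, h0]
      norm_num
    · field_simp

lemma mi2_split {A B : Type} [Fintype A] [Fintype B] (p : A × B → ℝ)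
    (hp : ∀ x, 0 ≤ p x) :
    mi2 p = (∑ a, ∑ b, p (a, b) * Real.log (p (a, b) / (∑ b', p (a, b'))))
      - ∑ b, (∑ a', p (a', b)) * Real.log (∑ a', p (a', b)) := by
  have key : ∀ a b, p (a, b) * Real.log (p (a, b) / ((∑ b', p (a, b')) * (∑ a', p (a', b))))
      = p (a, b) * Real.log (p (a, b) / (∑ b', p (a, b'))) -
        p (a, b) * Real.log (∑ a', p (a', b)) := by
    intro a b
    rcases eq_or_ne (p (a, b)) 0 with h0 | h0
    · rw [h0]; ring
    · have hpos : 0 < p (a, b) := lt_of_le_of_ne (hp _) (Ne.symm h0)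
      have hrow : 0 < ∑ b', p (a, b') :=
        lt_of_lt_of_le hpos (Finset.single_le_sum (fun i _ => hp (a, i)) (Finset.mem_univ b))
      have hcol : 0 < ∑ a', p (a', b) :=
        lt_of_lt_of_le hpos (Finset.single_le_sum (fun i _ => hp (i, b)) (Finset.mem_univ a))
      rw [div_mul_eq_div_div, Real.log_div (div_ne_zero h0 hrow.ne') hcol.ne']
      ring
  unfold mi2
  simp only [key, Finset.sum_sub_distrib]
  congr 1
  rw [Finset.sum_comm]
  apply Finset.sum_congr rfl
  intro b _
  rw [Finset.sum_mul]

/-- Data processing: merging symbols of the first coordinate cannot increase `mi2`. -/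
lemma mi2_push_le {A A' B : Type} [Fintype A] [Fintype A'] [Fintype B] [DecidableEq A']
    (p : A × B → ℝ) (hp : ∀ x, 0 ≤ p x) (g : A → A') :
    mi2 (fun x : A' × B => ∑ a, if g a = x.1 then p (a, x.2) else 0) ≤ mi2 p := by
  set q : A' × B → ℝ := fun x => ∑ a, if g a = x.1 then p (a, x.2) else 0 with hq
  have hq0 : ∀ x, 0 ≤ q x := by
    intro x
    apply Finset.sum_nonneg
    intro a _
    split_ifs
    · exact hp _
    · exact le_rfl
  have qfilter : ∀ (a' : A') (b : B),
      q (a', b) = ∑ a ∈ Finset.univ.filter (fun a => g a = a'), p (a, b) := by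
    intro a' b
    rw [Finset.sum_filter]
  have col_eq : ∀ b : B, (∑ a', q (a', b)) = ∑ a, p (a, b) := by
    intro b
    simp only [qfilter]
    exact Finset.sum_fiberwise Finset.univ g (fun a => p (a, b))
  have row_eq : ∀ a' : A',
      (∑ b, q (a', b)) = ∑ a ∈ Finset.univ.filter (fun a => g a = a'), (∑ b, p (a, b)) := by
    intro a'
    simp only [qfilter]
    rw [Finset.sum_comm]
  rw [mi2_split p hp, mi2_split q hq0]
  have hcol : (∑ b, (∑ a', q (a', b)) * Real.log (∑ a', q (a', b)))
      = ∑ b, (∑ a', p (a', b)) * Real.log (∑ a', p (a', b)) := by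
    apply Finset.sum_congr rfl
    intro b _
    rw [col_eq b]
  rw [hcol]
  apply sub_le_sub_right
  rw [← Finset.sum_fiberwise Finset.univ g
    (fun a => ∑ b, p (a, b) * Real.log (p (a, b) / (∑ b', p (a, b'))))]
  apply Finset.sum_le_sum
  intro a' _
  refine le_trans (Finset.sum_le_sum fun b _ => ?_) (le_of_eq Finset.sum_comm)
  have key := logSum (Finset.univ.filter (fun a => g a = a'))
    (fun a => p (a, b)) (fun a => ∑ b', p (a, b'))
    (fun a _ => hp _) (fun a _ => Finset.sum_nonneg fun b' _ => hp _)
    (fun a _ h0 => by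
      have := (Finset.sum_eq_zero_iff_of_nonneg (fun b' _ => hp (a, b'))).mp h0
      exact this b (Finset.mem_univ b))
  rw [← qfilter a' b] at key
  rw [← row_eq a'] at key
  exact key

end AuxDefs
section Part2

/-- Mutual information is at most `card B` (crude bound). -/
lemma mi2_le_card {A B : Type} [Fintype A] [Fintype B] (p : A × B → ℝ)
    (hp : ∀ x, 0 ≤ p x) : mi2 p ≤ Fintype.card B := by
  unfold mi2
  rw [Finset.sum_comm]
  have hb : ∀ b : B,
      (∑ a, p (a, b) * Real.log (p (a, b) / ((∑ b', p (a, b')) * (∑ a', p (a', b))))) ≤ 1 := by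
    intro b
    have step1 : ∀ a : A, p (a, b) * Real.log (p (a, b) / ((∑ b', p (a, b')) * (∑ a', p (a', b))))
        ≤ p (a, b) * (- Real.log (∑ a', p (a', b))) := by
      intro a
      rcases eq_or_ne (p (a, b)) 0 with h0 | h0
      · rw [h0, zero_mul, zero_mul]
      · have hpos : 0 < p (a, b) := lt_of_le_of_ne (hp _) (Ne.symm h0)
        have hrow : 0 < ∑ b', p (a, b') :=
          lt_of_lt_of_le hpos (Finset.single_le_sum (fun i _ => hp (a, i)) (Finset.mem_univ b))
        have hcol : 0 < ∑ a', p (a', b) :=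
          lt_of_lt_of_le hpos (Finset.single_le_sum (fun i _ => hp (i, b)) (Finset.mem_univ a))
        apply mul_le_mul_of_nonneg_left _ (hp (a, b))
        rw [Real.log_div h0 (by positivity), Real.log_mul hrow.ne' hcol.ne']
        have : Real.log (p (a, b)) ≤ Real.log (∑ b', p (a, b')) :=
          Real.log_le_log hpos (Finset.single_le_sum (fun i _ => hp (a, i)) (Finset.mem_univ b))
        linarith
    calc (∑ a, p (a, b) * Real.log (p (a, b) / ((∑ b', p (a, b')) * (∑ a', p (a', b)))))
        ≤ ∑ a, p (a, b) * (- Real.log (∑ a', p (a', b))) := Finset.sum_le_sum fun a _ => step1 a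
      _ = (∑ a', p (a', b)) * (- Real.log (∑ a', p (a', b))) := by rw [← Finset.sum_mul]
      _ ≤ 1 := by
          set c := ∑ a', p (a', b) with hc
          have hc0 : 0 ≤ c := Finset.sum_nonneg fun a _ => hp _
          rcases eq_or_lt_of_le hc0 with h | h
          · rw [← h]; norm_num
          · have : Real.log c⁻¹ ≤ c⁻¹ - 1 := Real.log_le_sub_one_of_pos (by positivity)
            rw [Real.log_inv] at this
            have h2 : c * (-Real.log c) ≤ c * (c⁻¹ - 1) :=
              mul_le_mul_of_nonneg_left this hc0
            have h3 : c * (c⁻¹ - 1) = 1 - c := by field_simp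
            linarith
  calc (∑ b : B, ∑ a, p (a, b) * Real.log (p (a, b) / ((∑ b', p (a, b')) * (∑ a', p (a', b)))))
      ≤ ∑ _b : B, (1 : ℝ) := Finset.sum_le_sum fun b _ => hb b
    _ = Fintype.card B := by simp

/-- Factorization of a quadruple sum of a product. -/
lemma sum4 {A1 A2 B1 B2 : Type} [Fintype A1] [Fintype A2] [Fintype B1] [Fintype B2]
    (f : A1 → B1 → ℝ) (g : A2 → B2 → ℝ) :
    (∑ a1, ∑ a2, ∑ b1, ∑ b2, f a1 b1 * g a2 b2)
      = (∑ a1, ∑ b1, f a1 b1) * (∑ a2, ∑ b2, g a2 b2) := by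
  rw [Finset.sum_mul_sum]
  refine Finset.sum_congr rfl fun a1 _ => Finset.sum_congr rfl fun a2 _ => ?_
  rw [Finset.sum_mul_sum]

/-- Additivity of `mi2` for independent products. -/
lemma mi2_prod {A1 B1 A2 B2 : Type} [Fintype A1] [Fintype B1] [Fintype A2] [Fintype B2]
    (q1 : A1 × B1 → ℝ) (q2 : A2 × B2 → ℝ)
    (h1 : ∀ x, 0 ≤ q1 x) (h1s : ∑ x, q1 x = 1)
    (h2 : ∀ x, 0 ≤ q2 x) (h2s : ∑ x, q2 x = 1) :
    mi2 (fun x : (A1 × A2) × (B1 × B2) => q1 (x.1.1, x.2.1) * q2 (x.1.2, x.2.2))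
      = mi2 q1 + mi2 q2 := by
  have h1s' : (∑ a1, ∑ b1, q1 (a1, b1)) = 1 := by rw [← h1s, Fintype.sum_prod_type]
  have h2s' : (∑ a2, ∑ b2, q2 (a2, b2)) = 1 := by rw [← h2s, Fintype.sum_prod_type]
  unfold mi2
  simp only [Fintype.sum_prod_type]
  have key : ∀ (a1 : A1) (a2 : A2) (b1 : B1) (b2 : B2),
      q1 (a1, b1) * q2 (a2, b2) *
        Real.log (q1 (a1, b1) * q2 (a2, b2) /
          ((∑ c1, ∑ c2, q1 (a1, c1) * q2 (a2, c2)) * (∑ d1, ∑ d2, q1 (d1, b1) * q2 (d2, b2))))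
      = (q1 (a1, b1) * Real.log (q1 (a1, b1) / ((∑ c1, q1 (a1, c1)) * (∑ d1, q1 (d1, b1))))) * q2 (a2, b2)
        + q1 (a1, b1) * (q2 (a2, b2) * Real.log (q2 (a2, b2) / ((∑ c2, q2 (a2, c2)) * (∑ d2, q2 (d2, b2))))) := by
    intro a1 a2 b1 b2
    have hrow : (∑ c1, ∑ c2, q1 (a1, c1) * q2 (a2, c2))
        = (∑ c1, q1 (a1, c1)) * (∑ c2, q2 (a2, c2)) := by
      rw [Finset.sum_mul_sum]
    have hcolth : (∑ d1, ∑ d2, q1 (d1, b1) * q2 (d2, b2))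
        = (∑ d1, q1 (d1, b1)) * (∑ d2, q2 (d2, b2)) := by
      rw [Finset.sum_mul_sum]
    rw [hrow, hcolth]
    rcases eq_or_ne (q1 (a1, b1)) 0 with e1 | e1
    · rw [e1]; ring
    · rcases eq_or_ne (q2 (a2, b2)) 0 with e2 | e2
      · rw [e2]; ring
      · have hp1 : 0 < q1 (a1, b1) := lt_of_le_of_ne (h1 _) (Ne.symm e1)
        have hp2 : 0 < q2 (a2, b2) := lt_of_le_of_ne (h2 _) (Ne.symm e2)
        have hr1 : 0 < ∑ c1, q1 (a1, c1) :=
          lt_of_lt_of_le hp1 (Finset.single_le_sum (fun i _ => h1 (a1, i)) (Finset.mem_univ b1))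
        have hr2 : 0 < ∑ c2, q2 (a2, c2) :=
          lt_of_lt_of_le hp2 (Finset.single_le_sum (fun i _ => h2 (a2, i)) (Finset.mem_univ b2))
        have hcl1 : 0 < ∑ d1, q1 (d1, b1) :=
          lt_of_lt_of_le hp1 (Finset.single_le_sum (fun i _ => h1 (i, b1)) (Finset.mem_univ a1))
        have hcl2 : 0 < ∑ d2, q2 (d2, b2) :=
          lt_of_lt_of_le hp2 (Finset.single_le_sum (fun i _ => h2 (i, b2)) (Finset.mem_univ a2))
        have harg : q1 (a1, b1) * q2 (a2, b2) /
            ((∑ c1, q1 (a1, c1)) * (∑ c2, q2 (a2, c2)) * ((∑ d1, q1 (d1, b1)) * (∑ d2, q2 (d2, b2))))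
            = (q1 (a1, b1) / ((∑ c1, q1 (a1, c1)) * (∑ d1, q1 (d1, b1))))
              * (q2 (a2, b2) / ((∑ c2, q2 (a2, c2)) * (∑ d2, q2 (d2, b2)))) := by
          field_simp
        rw [harg, Real.log_mul (by positivity) (by positivity)]
        ring
  simp only [key, Finset.sum_add_distrib]
  congr 1
  · rw [sum4 (fun a1 b1 => q1 (a1, b1) * Real.log (q1 (a1, b1) / ((∑ c1, q1 (a1, c1)) * (∑ d1, q1 (d1, b1)))))
      (fun a2 b2 => q2 (a2, b2)), h2s', mul_one]
  · rw [sum4 (fun a1 b1 => q1 (a1, b1))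
      (fun a2 b2 => q2 (a2, b2) * Real.log (q2 (a2, b2) / ((∑ c2, q2 (a2, c2)) * (∑ d2, q2 (d2, b2))))),
      h1s', one_mul]

end Part2
section GK

def linkedRel {S Y Z : Type} (p : S × Y × Z → ℝ) (y y' : Y) : Prop :=
  ∃ z s s', p (s, y, z) ≠ 0 ∧ p (s', y', z) ≠ 0

def gkSetoid {S Y Z : Type} (p : S × Y × Z → ℝ) : Setoid Y :=
  ⟨Relation.EqvGen (linkedRel p), Relation.EqvGen.is_equivalence _⟩

lemma supp_iff_of_eqvGen {S Y Z : Type} {p : S × Y × Z → ℝ} {y y' : Y}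
    (h : Relation.EqvGen (linkedRel p) y y') :
    (∃ s z, p (s, y, z) ≠ 0) ↔ (∃ s z, p (s, y', z) ≠ 0) := by
  induction h with
  | rel a b hab =>
      rcases hab with ⟨z, s, s', ha, hb⟩
      exact iff_of_true ⟨s, z, ha⟩ ⟨s', z, hb⟩
  | refl => exact Iff.rfl
  | symm _ _ _ ih => exact ih.symm
  | trans _ _ _ _ _ ih1 ih2 => exact ih1.trans ih2

open scoped Classical in
noncomputable def gkZ {S Y Z : Type} (p : S × Y × Z → ℝ) [Nonempty Y] :
    Z → Quotient (gkSetoid p) := fun z =>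
  if h : ∃ s y, p (s, y, z) ≠ 0 then Quotient.mk _ h.choose_spec.choose
  else Quotient.mk _ (Classical.arbitrary Y)

lemma gk_agree {S Y Z : Type} (p : S × Y × Z → ℝ) [Nonempty Y] :
    ∀ s y z, p (s, y, z) ≠ 0 → Quotient.mk (gkSetoid p) y = gkZ p z := by
  intro s y z hp
  have h : ∃ s y, p (s, y, z) ≠ 0 := ⟨s, y, hp⟩
  rw [gkZ]
  rw [dif_pos h]
  exact Quotient.sound (Relation.EqvGen.rel _ _
    ⟨z, s, h.choose, hp, h.choose_spec.choose_spec⟩)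

lemma f_eqvGen_left {S1 Y1 Z1 S2 Y2 Z2 Q : Type}
    (p1 : S1 × Y1 × Z1 → ℝ) (p2 : S2 × Y2 × Z2 → ℝ)
    {f : Y1 × Y2 → Q} {f' : Z1 × Z2 → Q}
    (hag : ∀ s y z, prodDist p1 p2 (s, y, z) ≠ 0 → f y = f' z)
    {y1 y1' : Y1} (h : Relation.EqvGen (linkedRel p1) y1 y1')
    {y2 : Y2} (h2 : ∃ s z, p2 (s, y2, z) ≠ 0) :
    f (y1, y2) = f (y1', y2) := by
  induction h with
  | rel a b hab =>
      rcases hab with ⟨z1, s, s', ha, hb⟩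
      rcases h2 with ⟨s2, z2, h2⟩
      have e1 := hag (s, s2) (a, y2) (z1, z2) (mul_ne_zero ha h2)
      have e2 := hag (s', s2) (b, y2) (z1, z2) (mul_ne_zero hb h2)
      rw [e1, e2]
  | refl => rfl
  | symm _ _ _ ih => exact ih.symm
  | trans _ _ _ _ _ ih1 ih2 => exact ih1.trans ih2

lemma f_eqvGen_right {S1 Y1 Z1 S2 Y2 Z2 Q : Type}
    (p1 : S1 × Y1 × Z1 → ℝ) (p2 : S2 × Y2 × Z2 → ℝ)
    {f : Y1 × Y2 → Q} {f' : Z1 × Z2 → Q}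
    (hag : ∀ s y z, prodDist p1 p2 (s, y, z) ≠ 0 → f y = f' z)
    {y2 y2' : Y2} (h : Relation.EqvGen (linkedRel p2) y2 y2')
    {y1 : Y1} (h1 : ∃ s z, p1 (s, y1, z) ≠ 0) :
    f (y1, y2) = f (y1, y2') := by
  induction h with
  | rel a b hab =>
      rcases hab with ⟨z2, s, s', ha, hb⟩
      rcases h1 with ⟨s1, z1, h1⟩
      have e1 := hag (s1, s) (y1, a) (z1, z2) (mul_ne_zero h1 ha)
      have e2 := hag (s1, s') (y1, b) (z1, z2) (mul_ne_zero h1 hb)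
      rw [e1, e2]
  | refl => rfl
  | symm _ _ _ ih => exact ih.symm
  | trans _ _ _ _ _ ih1 ih2 => exact ih1.trans ih2

lemma f_factor {S1 Y1 Z1 S2 Y2 Z2 Q : Type}
    (p1 : S1 × Y1 × Z1 → ℝ) (p2 : S2 × Y2 × Z2 → ℝ)
    {f : Y1 × Y2 → Q} {f' : Z1 × Z2 → Q}
    (hag : ∀ s y z, prodDist p1 p2 (s, y, z) ≠ 0 → f y = f' z)
    {y1 : Y1} {y2 : Y2}
    (h1 : ∃ s z, p1 (s, y1, z) ≠ 0) (h2 : ∃ s z, p2 (s, y2, z) ≠ 0) :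
    f (y1, y2) = f ((Quotient.mk (gkSetoid p1) y1).out, (Quotient.mk (gkSetoid p2) y2).out) := by
  have e1 : Relation.EqvGen (linkedRel p1) y1 (Quotient.mk (gkSetoid p1) y1).out := by
    have h := Quotient.exact (Quotient.out_eq (Quotient.mk (gkSetoid p1) y1)).symm
    exact h
  have e2 : Relation.EqvGen (linkedRel p2) y2 (Quotient.mk (gkSetoid p2) y2).out := by
    have h := Quotient.exact (Quotient.out_eq (Quotient.mk (gkSetoid p2) y2)).symm
    exact h
  have h1' : ∃ s z, p1 (s, (Quotient.mk (gkSetoid p1) y1).out, z) ≠ 0 :=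
    (supp_iff_of_eqvGen e1).mp h1
  calc f (y1, y2) = f ((Quotient.mk (gkSetoid p1) y1).out, y2) :=
        f_eqvGen_left p1 p2 hag e1 h2
    _ = f ((Quotient.mk (gkSetoid p1) y1).out, (Quotient.mk (gkSetoid p2) y2).out) :=
        f_eqvGen_right p1 p2 hag e2 h1'

end GK
section IndDist

lemma sumCollapse {Q S' Y Z : Type} [Fintype Q] [DecidableEq Q] [Fintype S']
    [Fintype Y] [Fintype Z] (f : Y → Q) (g : S' → Y → Z → ℝ) :
    (∑ q : Q, ∑ s, ∑ y, ∑ z, if f y = q then g s y z else 0) = ∑ s, ∑ y, ∑ z, g s y z := by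
  rw [Finset.sum_comm]
  refine Finset.sum_congr rfl fun s _ => ?_
  rw [Finset.sum_comm]
  refine Finset.sum_congr rfl fun y _ => ?_
  rw [Finset.sum_comm]
  refine Finset.sum_congr rfl fun z _ => ?_
  rw [Finset.sum_ite_eq]
  simp

lemma ind_nonneg {S Y Z Q : Type} [Fintype S] [Fintype Y] [Fintype Z] [Fintype Q]
    [DecidableEq Q] (p : S × Y × Z → ℝ) (hp : ∀ x, 0 ≤ p x) (f : Y → Q) :
    ∀ x : Q × S, 0 ≤ ∑ y, ∑ z, if f y = x.1 then p (x.2, y, z) else 0 := by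
  intro x
  refine Finset.sum_nonneg fun y _ => Finset.sum_nonneg fun z _ => ?_
  split_ifs
  · exact hp _
  · exact le_rfl

lemma ind_sum {S Y Z Q : Type} [Fintype S] [Fintype Y] [Fintype Z] [Fintype Q]
    [DecidableEq Q] (p : S × Y × Z → ℝ) (hs : ∑ x, p x = 1) (f : Y → Q) :
    (∑ x : Q × S, ∑ y, ∑ z, if f y = x.1 then p (x.2, y, z) else 0) = 1 := by
  rw [Fintype.sum_prod_type]
  rw [sumCollapse f (fun s y z => p (s, y, z))]
  rw [← hs]
  simp only [Fintype.sum_prod_type]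

/-- The induced joint distribution of `(f1(Y1), f2(Y2))` with `(S1, S2)` under a product
distribution factorizes. -/
lemma ind_prod {S1 Y1 Z1 S2 Y2 Z2 Q1 Q2 : Type}
    [Fintype S1] [Fintype Y1] [Fintype Z1] [Fintype S2] [Fintype Y2] [Fintype Z2]
    [Fintype Q1] [Fintype Q2] [DecidableEq Q1] [DecidableEq Q2]
    (p1 : S1 × Y1 × Z1 → ℝ) (p2 : S2 × Y2 × Z2 → ℝ) (f1 : Y1 → Q1) (f2 : Y2 → Q2) :
    (fun x : (Q1 × Q2) × (S1 × S2) =>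
        ∑ y, ∑ z, if (f1 y.1, f2 y.2) = x.1 then prodDist p1 p2 (x.2, y, z) else 0)
      = fun x => (∑ y, ∑ z, if f1 y = x.1.1 then p1 (x.2.1, y, z) else 0)
          * (∑ y, ∑ z, if f2 y = x.1.2 then p2 (x.2.2, y, z) else 0) := by
  funext x
  obtain ⟨⟨c1, c2⟩, s1, s2⟩ := x
  simp only [Fintype.sum_prod_type]
  have key : ∀ (y1 : Y1) (y2 : Y2) (z1 : Z1) (z2 : Z2),
      (if (f1 y1, f2 y2) = (c1, c2) then prodDist p1 p2 ((s1, s2), (y1, y2), (z1, z2)) else 0)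
      = (if f1 y1 = c1 then p1 (s1, y1, z1) else 0) * (if f2 y2 = c2 then p2 (s2, y2, z2) else 0) := by
    intro y1 y2 z1 z2
    by_cases e1 : f1 y1 = c1 <;> by_cases e2 : f2 y2 = c2 <;>
      simp [e1, e2, prodDist, Prod.ext_iff]
  simp only [key]
  exact sum4 (fun y1 z1 => if f1 y1 = c1 then p1 (s1, y1, z1) else 0)
    (fun y2 z2 => if f2 y2 = c2 then p2 (s2, y2, z2) else 0)

end IndDist

section SIset

variable {S Y Z : Type} [Fintype S] [Fintype Y] [Fintype Z]

def SIset (p : S × Y × Z → ℝ) : Set ℝ :=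
  { r : ℝ | ∃ (Q : Type) (instQ : Fintype Q) (_ : DecidableEq Q)
      (f : Y → Q) (f' : Z → Q),
      (∀ s y z, p (s, y, z) ≠ 0 → f y = f' z) ∧
      r = @mi2 Q S instQ _ (fun x => ∑ y, ∑ z, if f y = x.1 then p (x.2, y, z) else 0) }

lemma SIwedge_eq (p : S × Y × Z → ℝ) : SIwedge p = sSup (SIset p) := rfl

lemma mem_SI {Q : Type} [Fintype Q] [DecidableEq Q]
    (p : S × Y × Z → ℝ) (f : Y → Q) (f' : Z → Q)
    (hag : ∀ s y z, p (s, y, z) ≠ 0 → f y = f' z) :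
    mi2 (fun x : Q × S => ∑ y, ∑ z, if f y = x.1 then p (x.2, y, z) else 0) ∈ SIset p := by
  refine ⟨Q, ‹Fintype Q›, ‹DecidableEq Q›, f, f', hag, ?_⟩
  rfl

lemma SI_nonempty (p : S × Y × Z → ℝ) : (SIset p).Nonempty :=
  ⟨_, mem_SI p (fun _ => PUnit.unit) (fun _ => PUnit.unit) (fun _ _ _ _ => rfl)⟩

lemma SI_bddAbove (p : S × Y × Z → ℝ) (hp : ∀ x, 0 ≤ p x) : BddAbove (SIset p) := by
  refine ⟨Fintype.card S, ?_⟩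
  rintro r ⟨Q, iQ, dQ, f, f', hag, rfl⟩
  exact @mi2_le_card Q S iQ _ _ (@ind_nonneg S Y Z Q _ _ _ iQ dQ p hp f)

end SIset

set_option maxHeartbeats 2000000 in
/-- `SI_∧` is additive under independent combination. -/
theorem SIwedge_additive
    {S1 Y1 Z1 S2 Y2 Z2 : Type} [Fintype S1] [Fintype Y1] [Fintype Z1]
    [Fintype S2] [Fintype Y2] [Fintype Z2]
    (p1 : S1 × Y1 × Z1 → ℝ) (p2 : S2 × Y2 × Z2 → ℝ)
    (hp1 : IsProbDist p1) (hp2 : IsProbDist p2) :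
    SIwedge (prodDist p1 p2) = SIwedge p1 + SIwedge p2 := by
  classical
  rcases isEmpty_or_nonempty Y1 with hY1 | hY1
  · exact absurd hp1.2 (by haveI := hY1; simp [Finset.univ_eq_empty])
  rcases isEmpty_or_nonempty Y2 with hY2 | hY2
  · exact absurd hp2.2 (by haveI := hY2; simp [Finset.univ_eq_empty])
  have hprod0 : ∀ x, 0 ≤ prodDist p1 p2 x := fun x => mul_nonneg (hp1.1 _) (hp2.1 _)
  have h1ne := SI_nonempty p1
  have h2ne := SI_nonempty p2
  have h12ne := SI_nonempty (prodDist p1 p2)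
  have h1bdd := SI_bddAbove p1 hp1.1
  have h2bdd := SI_bddAbove p2 hp2.1
  have h12bdd := SI_bddAbove (prodDist p1 p2) hprod0
  rw [SIwedge_eq p1, SIwedge_eq p2, SIwedge_eq (prodDist p1 p2)]
  apply le_antisymm
  · -- upper bound: every achievable value for the product is ≤ sum of sups
    apply csSup_le h12ne
    rintro r ⟨Q, iQ, dQ, f, f', hag, rfl⟩
    letI := iQ
    letI := dQ
    haveI : Fintype (Quotient (gkSetoid p1)) := Fintype.ofFinite _
    haveI : Fintype (Quotient (gkSetoid p2)) := Fintype.ofFinite _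
    haveI : DecidableEq (Quotient (gkSetoid p1)) := Classical.decEq _
    haveI : DecidableEq (Quotient (gkSetoid p2)) := Classical.decEq _
    set k1 : Y1 → Quotient (gkSetoid p1) := Quotient.mk (gkSetoid p1) with hk1
    set k2 : Y2 → Quotient (gkSetoid p2) := Quotient.mk (gkSetoid p2) with hk2
    set g : Quotient (gkSetoid p1) × Quotient (gkSetoid p2) → Q :=
      fun c => f (c.1.out, c.2.out) with hg
    set qK : (Quotient (gkSetoid p1) × Quotient (gkSetoid p2)) × (S1 × S2) → ℝ :=
      fun x => ∑ y, ∑ z, if (k1 y.1, k2 y.2) = x.1 then prodDist p1 p2 (x.2, y, z) else 0 with hqK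
    have hqK0 : ∀ x, 0 ≤ qK x :=
      ind_nonneg (prodDist p1 p2) hprod0 (fun y => (k1 y.1, k2 y.2))
    have push : (fun x : Q × (S1 × S2) => ∑ c, if g c = x.1 then qK (c, x.2) else 0)
        = fun x : Q × (S1 × S2) =>
            ∑ y, ∑ z, if f y = x.1 then prodDist p1 p2 (x.2, y, z) else 0 := by
      funext x
      have l1 : ∀ c, (if g c = x.1 then qK (c, x.2) else 0)
          = ∑ y : Y1 × Y2, ∑ z : Z1 × Z2,
              (if (k1 y.1, k2 y.2) = c then
                (if g c = x.1 then prodDist p1 p2 (x.2, y, z) else 0) else 0) := by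
        intro c
        rcases eq_or_ne (g c) x.1 with h | h
        · simp [hqK, h]
        · simp only [if_neg h]
          symm
          apply Finset.sum_eq_zero
          intro y _
          apply Finset.sum_eq_zero
          intro z _
          simp [h]
      rw [Finset.sum_congr rfl fun c _ => l1 c]
      rw [Finset.sum_comm]
      refine Finset.sum_congr rfl fun y _ => ?_
      rw [Finset.sum_comm]
      refine Finset.sum_congr rfl fun z _ => ?_
      rw [Finset.sum_ite_eq]
      simp only [Finset.mem_univ, if_true]
      rcases eq_or_ne (prodDist p1 p2 (x.2, y, z)) 0 with h0 | h0
      · rw [h0]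
        simp
      · have h1 : p1 (x.2.1, y.1, z.1) ≠ 0 := left_ne_zero_of_mul h0
        have h2 : p2 (x.2.2, y.2, z.2) ≠ 0 := right_ne_zero_of_mul h0
        have hf : f y = g (k1 y.1, k2 y.2) := by
          have hff := f_factor p1 p2 hag ⟨x.2.1, z.1, h1⟩ ⟨x.2.2, z.2, h2⟩
          exact hff
        rw [hf]
    have step1 : mi2 (fun x : Q × (S1 × S2) =>
        ∑ y, ∑ z, if f y = x.1 then prodDist p1 p2 (x.2, y, z) else 0) ≤ mi2 qK := by
      rw [← push]
      exact mi2_push_le qK hqK0 g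
    have step2 : mi2 qK
        = mi2 (fun x : Quotient (gkSetoid p1) × S1 =>
            ∑ y, ∑ z, if k1 y = x.1 then p1 (x.2, y, z) else 0)
          + mi2 (fun x : Quotient (gkSetoid p2) × S2 =>
            ∑ y, ∑ z, if k2 y = x.1 then p2 (x.2, y, z) else 0) := by
      rw [hqK, ind_prod p1 p2 k1 k2]
      exact mi2_prod _ _ (ind_nonneg p1 hp1.1 k1) (ind_sum p1 hp1.2 k1)
        (ind_nonneg p2 hp2.1 k2) (ind_sum p2 hp2.2 k2)
    have m1 : mi2 (fun x : Quotient (gkSetoid p1) × S1 =>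
        ∑ y, ∑ z, if k1 y = x.1 then p1 (x.2, y, z) else 0) ∈ SIset p1 :=
      mem_SI p1 k1 (gkZ p1) (gk_agree p1)
    have m2 : mi2 (fun x : Quotient (gkSetoid p2) × S2 =>
        ∑ y, ∑ z, if k2 y = x.1 then p2 (x.2, y, z) else 0) ∈ SIset p2 :=
      mem_SI p2 k2 (gkZ p2) (gk_agree p2)
    refine step1.trans ?_
    rw [step2]
    exact add_le_add (le_csSup h1bdd m1) (le_csSup h2bdd m2)
  · -- lower bound
    have key : ∀ r1 ∈ SIset p1, ∀ r2 ∈ SIset p2, r1 + r2 ∈ SIset (prodDist p1 p2) := by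
      rintro r1 ⟨Q1, iQ1, dQ1, f1, f1', hag1, hr1⟩ r2 ⟨Q2, iQ2, dQ2, f2, f2', hag2, hr2⟩
      letI := iQ1; letI := dQ1; letI := iQ2; letI := dQ2
      have hagg : ∀ s y z, prodDist p1 p2 (s, y, z) ≠ 0 →
          (f1 y.1, f2 y.2) = ((f1' z.1, f2' z.2) : Q1 × Q2) := by
        intro s y z h0
        have h1 : p1 (s.1, y.1, z.1) ≠ 0 := left_ne_zero_of_mul h0
        have h2 : p2 (s.2, y.2, z.2) ≠ 0 := right_ne_zero_of_mul h0
        rw [hag1 s.1 y.1 z.1 h1, hag2 s.2 y.2 z.2 h2]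
      refine ⟨Q1 × Q2, inferInstance, inferInstance,
        (fun y => (f1 y.1, f2 y.2)), (fun z => (f1' z.1, f2' z.2)), hagg, ?_⟩
      rw [hr1, hr2]
      have e2 : mi2 (fun x : (Q1 × Q2) × (S1 × S2) =>
          ∑ y, ∑ z, if (f1 y.1, f2 y.2) = x.1 then prodDist p1 p2 (x.2, y, z) else 0)
          = mi2 (fun x : Q1 × S1 => ∑ y, ∑ z, if f1 y = x.1 then p1 (x.2, y, z) else 0)
            + mi2 (fun x : Q2 × S2 => ∑ y, ∑ z, if f2 y = x.1 then p2 (x.2, y, z) else 0) := by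
        rw [ind_prod p1 p2 f1 f2]
        exact mi2_prod _ _ (ind_nonneg p1 hp1.1 f1) (ind_sum p1 hp1.2 f1)
          (ind_nonneg p2 hp2.1 f2) (ind_sum p2 hp2.2 f2)
      exact e2.symm
    have h3 : ∀ r1 ∈ SIset p1, r1 ≤ sSup (SIset (prodDist p1 p2)) - sSup (SIset p2) := by
      intro r1 hr1
      rw [le_sub_iff_add_le]
      have h4 : ∀ r2 ∈ SIset p2, r2 ≤ sSup (SIset (prodDist p1 p2)) - r1 := by
        intro r2 hr2
        rw [le_sub_iff_add_le, add_comm]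
        exact le_csSup h12bdd (key r1 hr1 r2 hr2)
      have h5 := csSup_le h2ne h4
      linarith
    have h6 := csSup_le h1ne h3
    linarith
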